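/- Let N ≥ 1, k ≥ 1 and m ≥ 0 be natural numbers, and let p_0, …, p_m be pairwise distinct points of ℝ^N. Then the ordered configuration space Conf(k, ℝ^N \ {p_0, …, p_m}) is (N−2)-connected. -/

import Mathlib

/-- The ordered configuration space of `k` points in `X`: the space of injective
maps `Fin k → X`, topologized as a subspace of the product space `X^k`. -/
abbrev Conf (k : ℕ) (X : Type*) [TopologicalSpace X] : Type _ :=
  {f : Fin k → X // Function.Injective f}

/-- A space `X` is `c`-connected (for an integer `c ≥ -1`) if it is nonempty and,
for every natural number `i ≤ c`, every continuous map from the sphere `S^i`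
(the unit sphere in `ℝ^{i+1}`) to `X` extends to a continuous map from the
closed unit disk `D^{i+1}` to `X`. -/
def IsCConnected (c : ℤ) (X : Type*) [TopologicalSpace X] : Prop :=
  Nonempty X ∧ ∀ i : ℕ, (i : ℤ) ≤ c →
    ∀ f : (Metric.sphere (0 : EuclideanSpace ℝ (Fin (i + 1))) 1) → X,
      Continuous f →
        ∃ g : (Metric.closedBall (0 : EuclideanSpace ℝ (Fin (i + 1))) 1) → X,
          Continuous g ∧
            ∀ x : Metric.sphere (0 : EuclideanSpace ℝ (Fin (i + 1))) 1,
              g ⟨x.val, Metric.sphere_subset_closedBall x.property⟩ = f x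

open Set Metric Module
open scoped NNReal ENNReal Manifold


/-- Generic small translate of a Lipschitz image of the unit ball avoids finitely many
affine subspaces of sufficiently large codimension. -/
lemma exists_good_translate {E X : Type*} [NormedAddCommGroup E] [NormedSpace ℝ E]
    [FiniteDimensional ℝ E] [NormedAddCommGroup X] [NormedSpace ℝ X] [FiniteDimensional ℝ X]
    {ι : Type*} [Finite ι] (Q : X → E) {K : ℝ≥0}
    (hlip : LipschitzOnWith K Q (closedBall 0 1))
    (W : ι → Submodule ℝ E) (c : ι → E)
    (hrank : ∀ j, finrank ℝ (W j) + finrank ℝ X < finrank ℝ E)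
    {ε : ℝ} (hε : 0 < ε) :
    ∃ v : E, ‖v‖ < ε ∧ ∀ j, ∀ x ∈ closedBall (0 : X) 1, Q x + v - c j ∉ W j := by
  by_contra h
  push_neg at h
  have hι : Nonempty ι := by
    obtain ⟨j, -⟩ := h 0 (by simpa using hε); exact ⟨j⟩
  set Φ : (j : ι) → (↥(W j) × X → E) := fun j z => (c j + (z.1 : E)) - Q z.2 with hΦ
  have hcover : ball (0 : E) ε ⊆ ⋃ j, Φ j '' (univ ×ˢ closedBall 0 1) := by
    intro v hv
    rw [mem_ball, dist_zero_right] at hv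
    obtain ⟨j, x, hx, hmem⟩ := h v hv
    refine mem_iUnion.2 ⟨j, ⟨(⟨Q x + v - c j, hmem⟩, x), ⟨mem_univ _, hx⟩, ?_⟩⟩
    simp only [hΦ]
    abel
  have hd : ∀ j, dimH (Φ j '' (univ ×ˢ closedBall 0 1))
      ≤ ((finrank ℝ (W j) + finrank ℝ X : ℕ) : ℝ≥0∞) := by
    intro j
    have hlip2 : LipschitzOnWith (1 + K) (Φ j) (univ ×ˢ closedBall 0 1) := by
      rw [lipschitzOnWith_iff_dist_le_mul]
      rintro z hz z' hz'
      have key : Φ j z - Φ j z' = ((z.1 : E) - (z'.1 : E)) + (Q z'.2 - Q z.2) := by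
        simp only [hΦ]; abel
      have h1 : dist (Φ j z) (Φ j z') ≤ ‖(z.1 : E) - (z'.1 : E)‖ + ‖Q z'.2 - Q z.2‖ := by
        rw [dist_eq_norm, key]; exact norm_add_le _ _
      have h2 : ‖(z.1 : E) - (z'.1 : E)‖ ≤ dist z z' := by
        rw [← dist_eq_norm, ← Subtype.dist_eq]
        rw [Prod.dist_eq]
        exact le_max_left _ _
      have h3 : ‖Q z'.2 - Q z.2‖ ≤ (K : ℝ) * dist z z' := by
        rw [← dist_eq_norm]
        refine ((lipschitzOnWith_iff_dist_le_mul.1 hlip) _ hz'.2 _ hz.2).trans ?_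
        have : dist z'.2 z.2 ≤ dist z z' := by
          rw [dist_comm z z', Prod.dist_eq]; exact le_max_right _ _
        exact mul_le_mul_of_nonneg_left this K.2
      have h4 : dist z z' = 1 * dist z z' := (one_mul _).symm
      calc dist (Φ j z) (Φ j z') ≤ ‖(z.1 : E) - (z'.1 : E)‖ + ‖Q z'.2 - Q z.2‖ := h1
        _ ≤ dist z z' + (K : ℝ) * dist z z' := add_le_add h2 h3
        _ = ((1 + K : ℝ≥0) : ℝ) * dist z z' := by push_cast; ring
    calc dimH (Φ j '' (univ ×ˢ closedBall 0 1)) ≤ dimH (univ ×ˢ closedBall (0:X) 1 :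
            Set (↥(W j) × X)) := hlip2.dimH_image_le
      _ ≤ dimH (univ : Set (↥(W j) × X)) := dimH_mono (subset_univ _)
      _ = (finrank ℝ (↥(W j) × X) : ℝ≥0∞) := Real.dimH_univ_eq_finrank _
      _ = _ := by rw [Module.finrank_prod]
  have hout : (finrank ℝ E : ℝ≥0∞) ≤ ((finrank ℝ E - 1 : ℕ) : ℝ≥0∞) := by
    calc (finrank ℝ E : ℝ≥0∞) = dimH (ball (0 : E) ε) :=
          (Real.dimH_of_mem_nhds (ball_mem_nhds 0 hε)).symm
      _ ≤ dimH (⋃ j, Φ j '' (univ ×ˢ closedBall 0 1)) := dimH_mono hcover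
      _ = ⨆ j, dimH (Φ j '' (univ ×ˢ closedBall 0 1)) := dimH_iUnion _
      _ ≤ ((finrank ℝ E - 1 : ℕ) : ℝ≥0∞) := by
          refine iSup_le fun j => (hd j).trans (Nat.cast_le.2 ?_)
          have := hrank j; omega
  have h1 := Nat.cast_le.1 hout
  obtain ⟨j⟩ := hι
  have := hrank j
  omega


lemma contDiff_exists_lipschitzOnWith {X E : Type*} [NormedAddCommGroup X] [NormedSpace ℝ X]
    [FiniteDimensional ℝ X] [NormedAddCommGroup E] [NormedSpace ℝ E]
    (Q : X → E) (hQ : ContDiff ℝ 1 Q) :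
    ∃ K : ℝ≥0, LipschitzOnWith K Q (closedBall 0 1) := by
  obtain ⟨C, hC⟩ := (isCompact_closedBall (0 : X) 1).exists_bound_of_continuousOn
    (hQ.continuous_fderiv one_ne_zero).continuousOn
  refine ⟨C.toNNReal, lipschitzOnWith_iff_dist_le_mul.2 fun x hx y hy => ?_⟩
  have := (convex_closedBall (0 : X) 1).norm_image_sub_le_of_norm_fderiv_le
    (fun z hz => (hQ.differentiable one_ne_zero).differentiableAt) hC hy hx
  rw [dist_eq_norm, dist_eq_norm]
  refine this.trans ?_
  exact mul_le_mul_of_nonneg_right (Real.le_coe_toNNReal C) (norm_nonneg _)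


lemma exists_smooth_approx {X E : Type*} [NormedAddCommGroup X] [NormedSpace ℝ X]
    [FiniteDimensional ℝ X] [NormedAddCommGroup E] [NormedSpace ℝ E]
    (f : X → E) (hf : Continuous f) {ε : ℝ} (hε : 0 < ε) :
    ∃ Q : X → E, ContDiff ℝ 1 Q ∧ ∀ x, ‖Q x - f x‖ < ε := by
  have Hloc : ∀ x : X, ∃ U ∈ nhds x, ∃ g : X → E,
      ContMDiffOn (𝓘(ℝ, X)) (𝓘(ℝ, E)) ((⊤ : ℕ∞) : WithTop ℕ∞) g U ∧ ∀ y ∈ U, g y ∈ ball (f y) ε := by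
    intro x
    refine ⟨f ⁻¹' ball (f x) ε, hf.continuousAt.preimage_mem_nhds (ball_mem_nhds _ hε),
      fun _ => f x, contMDiffOn_const, fun y hy => ?_⟩
    rw [mem_preimage, mem_ball] at hy
    rw [mem_ball]
    rwa [dist_comm]
  obtain ⟨g, hg⟩ := exists_contMDiffMap_forall_mem_convex_of_local (I := 𝓘(ℝ, X))
    (t := fun x => ball (f x) ε) (fun x => convex_ball _ _) Hloc
  have hsm := contMDiff_iff_contDiff.mp g.contMDiff
  refine ⟨g, hsm.of_le (by exact_mod_cast le_top), fun x => ?_⟩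
  have := hg x
  rwa [mem_ball, dist_eq_norm] at this


lemma glue_extension {X E : Type*} [NormedAddCommGroup X] [NormedSpace ℝ X]
    [NormedAddCommGroup E] [NormedSpace ℝ E]
    (A : Set E) (fh : ↥(sphere (0:X) 1) → E)
    {ε : ℝ} (hε : 0 < ε) (hfar : ∀ s, 3*ε ≤ infDist (fh s) A)
    (ft : X → E) (hftc : Continuous ft) (hext : ∀ s : ↥(sphere (0:X) 1), ft s.val = fh s)
    (Q' : X → E) (hQ'c : Continuous Q') (hQ'A : ∀ x ∈ closedBall (0:X) 1, Q' x ∉ A)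
    (hQ'near : ∀ s : ↥(sphere (0:X) 1), ‖Q' s.val - fh s‖ < 2*ε) :
    ∃ G : X → E, Continuous G ∧ (∀ x ∈ closedBall (0:X) 1, G x ∉ A) ∧
      ∀ s : ↥(sphere (0:X) 1), G s.val = fh s := by
  set r : X → X := fun x => (max ‖x‖ (1/2))⁻¹ • x with hr
  have hrpos : ∀ x : X, (0:ℝ) < max ‖x‖ (1/2) := fun x =>
    lt_of_lt_of_le (by norm_num) (le_max_right _ _)
  have hrc : Continuous r :=
    ((continuous_norm.max continuous_const).inv₀ fun x => (hrpos x).ne').smul continuous_id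
  set G : X → E := fun x => if ‖x‖ ≤ 1/2 then Q' ((2:ℝ) • x)
    else (2*‖x‖-1) • ft (r x) + (2-2*‖x‖) • Q' (r x) with hG
  have hb1 : Continuous fun x : X => Q' ((2:ℝ) • x) :=
    hQ'c.comp (continuous_const.smul continuous_id)
  have hb2 : Continuous fun x : X => (2*‖x‖-1) • ft (r x) + (2-2*‖x‖) • Q' (r x) := by
    refine Continuous.add ?_ ?_
    · exact ((continuous_const.mul continuous_norm).sub continuous_const).smul
        (hftc.comp hrc)
    · exact (continuous_const.sub (continuous_const.mul continuous_norm)).smul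
        (hQ'c.comp hrc)
  have hGc : Continuous G := by
    rw [hG]
    refine Continuous.if_le hb1 hb2 continuous_norm continuous_const fun x hx => ?_
    have hmax : max ‖x‖ (1/2) = 1/2 := by rw [hx]; exact max_self _
    have : r x = (2:ℝ) • x := by rw [hr]; simp only [hmax]; norm_num
    rw [this, hx]
    norm_num
  have hrs : ∀ x : X, 1/2 < ‖x‖ → ‖r x‖ = 1 := by
    intro x hx
    have hmax : max ‖x‖ (1/2) = ‖x‖ := max_eq_left hx.le
    have hx0 : ‖x‖ ≠ 0 := by positivity
    rw [hr]
    simp only [norm_smul, hmax, norm_inv, norm_norm]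
    field_simp
  have hval : ∀ x ∈ closedBall (0:X) 1, G x ∉ A := by
    intro x hx
    rw [mem_closedBall_zero_iff] at hx
    by_cases h12 : ‖x‖ ≤ 1/2
    · rw [hG]; simp only [if_pos h12]
      refine hQ'A _ ?_
      rw [mem_closedBall_zero_iff, norm_smul]
      rw [Real.norm_ofNat]
      linarith
    · push_neg at h12
      have hs1 : r x ∈ sphere (0:X) 1 := by
        rw [mem_sphere_zero_iff_norm]; exact hrs x h12
      set s : ↥(sphere (0:X) 1) := ⟨r x, hs1⟩ with hs
      have hGx : G x = (2*‖x‖-1) • ft (r x) + (2-2*‖x‖) • Q' (r x) := by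
        rw [hG]; simp only [if_neg (not_le.2 h12)]
      intro hGA
      have h1 : infDist (fh s) A ≤ dist (fh s) (G x) := infDist_le_dist_of_mem hGA
      have key : G x - fh s = (2-2*‖x‖) • (Q' (r x) - fh s) := by
        rw [hGx, ← hext s]
        show (2*‖x‖-1) • ft (r x) + (2-2*‖x‖) • Q' (r x) - ft (r x)
          = (2-2*‖x‖) • (Q' (r x) - ft (r x))
        module
      have h2 : dist (fh s) (G x) = ‖G x - fh s‖ := by
        rw [dist_eq_norm, norm_sub_rev]
      have h3 : ‖G x - fh s‖ ≤ ‖Q' (r x) - fh s‖ := by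
        rw [key, norm_smul, Real.norm_eq_abs]
        have : |2-2*‖x‖| ≤ 1 := by rw [abs_le]; constructor <;> linarith
        nlinarith [norm_nonneg (Q' (r x) - fh s)]
      have h4 : ‖Q' (r x) - fh s‖ < 2*ε := hQ'near s
      have h5 := hfar s
      linarith
  refine ⟨G, hGc, hval, fun s => ?_⟩
  have hs1 : ‖s.val‖ = 1 := mem_sphere_zero_iff_norm.mp s.property
  have hrx : r s.val = s.val := by
    rw [hr]
    simp only [hs1]
    norm_num
  rw [hG]
  simp only [hs1, hrx]
  rw [if_neg (by norm_num)]
  rw [hext s]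
  norm_num

/-- The ordered configuration space of `k ≥ 1` points in `ℝ^N` (`N ≥ 1`) with
`m + 1` pairwise distinct points removed is `(N - 2)`-connected. -/
theorem conf_complement_points_isConnected
    (N k m : ℕ) (hN : 1 ≤ N) (hk : 1 ≤ k)
    (p : Fin (m + 1) → (Fin N → ℝ)) (hp : Function.Injective p) :
    IsCConnected ((N : ℤ) - 2) (Conf k ↥((Set.range p)ᶜ)) := by
  constructor
  · -- Nonempty
    have hInf : Infinite (Fin N → ℝ) := by
      refine Infinite.of_injective (fun r _ => r) fun r r' h => ?_
      exact congrFun h ⟨0, hN⟩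
    have hinf : ((Set.range p)ᶜ).Infinite := (Set.finite_range p).infinite_compl
    let e := hinf.natEmbedding
    exact ⟨⟨fun a => e a.val, fun a b hab => Fin.val_injective (e.injective hab)⟩⟩
  · intro i hi f hf
    have hiN : i + 2 ≤ N := by
      have : (i : ℤ) + 2 ≤ (N : ℤ) := by linarith
      exact_mod_cast this
    -- the ambient euclidean space of configurations
    set J := Sum {q : Fin k × Fin k // q.1 ≠ q.2} (Fin k × Fin (m+1)) with hJ
    set φ : J → ((Fin k → Fin N → ℝ) →ₗ[ℝ] (Fin N → ℝ)) :=
      Sum.elim (fun q => LinearMap.proj (R := ℝ) (φ := fun _ : Fin k => Fin N → ℝ) q.val.1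
                 - LinearMap.proj (R := ℝ) (φ := fun _ : Fin k => Fin N → ℝ) q.val.2)
               (fun q => LinearMap.proj (R := ℝ) (φ := fun _ : Fin k => Fin N → ℝ) q.1) with hφ
    set cc : J → (Fin k → Fin N → ℝ) :=
      Sum.elim (fun _ => 0) (fun q _ => p q.2) with hcc
    set Lset : J → Set (Fin k → Fin N → ℝ) := fun ι => {F | φ ι F = φ ι (cc ι)} with hLset
    set A : Set (Fin k → Fin N → ℝ) := ⋃ ι, Lset ι with hA
    have hLdiag : ∀ (q : {q : Fin k × Fin k // q.1 ≠ q.2}) F,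
        F ∈ Lset (Sum.inl q) ↔ F q.val.1 = F q.val.2 := by
      intro q F
      simp [hLset, hφ, hcc, LinearMap.sub_apply, LinearMap.proj_apply, sub_eq_zero]
    have hLpt : ∀ (q : Fin k × Fin (m+1)) F,
        F ∈ Lset (Sum.inr q) ↔ F q.1 = p q.2 := by
      intro q F
      simp [hLset, hφ, hcc, LinearMap.proj_apply]
    have hAclosed : IsClosed A := by
      refine isClosed_iUnion_of_finite fun ι => ?_
      exact isClosed_eq (φ ι).continuous_of_finiteDimensional continuous_const
    have hAne : A.Nonempty :=
      ⟨(fun _ => p 0), Set.mem_iUnion.2 ⟨Sum.inr (⟨0, hk⟩, 0), (hLpt _ _).2 rfl⟩⟩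
    -- the boundary data, as a map into the ambient space
    set fhat : ↥(sphere (0 : EuclideanSpace ℝ (Fin (i+1))) 1) → (Fin k → Fin N → ℝ) :=
      fun s a => ((f s).val a).val with hfhat
    have hfhatc : Continuous fhat := continuous_pi fun a =>
      continuous_subtype_val.comp ((continuous_apply a).comp (continuous_subtype_val.comp hf))
    have hfhatA : ∀ s, fhat s ∉ A := by
      intro s hmem
      rw [hA, Set.mem_iUnion] at hmem
      obtain ⟨ι, hι⟩ := hmem
      cases ι with
      | inl q =>
        rw [hLdiag] at hι
        exact q.property ((f s).property (Subtype.ext hι))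
      | inr q =>
        rw [hLpt] at hι
        exact ((f s).val q.1).property ⟨q.2, hι.symm⟩
    -- positive distance from the boundary data to the forbidden set
    have hnt : Nontrivial (EuclideanSpace ℝ (Fin (i+1))) := by infer_instance
    have hcs : CompactSpace ↥(sphere (0 : EuclideanSpace ℝ (Fin (i+1))) 1) :=
      isCompact_iff_compactSpace.mp (isCompact_sphere _ _)
    have hsne : Nonempty ↥(sphere (0 : EuclideanSpace ℝ (Fin (i+1))) 1) :=
      (NormedSpace.sphere_nonempty.mpr zero_le_one).to_subtype
    obtain ⟨s₀, -, hs₀⟩ := isCompact_univ.exists_isMinOn univ_nonempty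
      ((continuous_infDist_pt A).comp hfhatc).continuousOn
    set ε := infDist (fhat s₀) A / 3 with hεdef
    have hε : 0 < ε := by
      have := (hAclosed.notMem_iff_infDist_pos hAne).mp (hfhatA s₀)
      positivity
    have hfar : ∀ s, 3*ε ≤ infDist (fhat s) A := by
      intro s
      have h' := hs₀ (Set.mem_univ s)
      simp only [Function.comp] at h'
      rw [Set.mem_setOf_eq] at h'
      rw [hεdef]
      linarith
    -- Tietze extension of the boundary data
    obtain ⟨ftC, hftC⟩ := ContinuousMap.exists_restrict_eq
      (isClosed_sphere : IsClosed (sphere (0 : EuclideanSpace ℝ (Fin (i+1))) 1))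
      ⟨fhat, hfhatc⟩
    have hext0 : ∀ s : ↥(sphere (0 : EuclideanSpace ℝ (Fin (i+1))) 1),
        ftC s.val = fhat s := by
      intro s
      have := DFunLike.congr_fun hftC s
      simpa [ContinuousMap.restrict] using this
    -- smooth approximation
    obtain ⟨Q, hQsm, hQnear⟩ := exists_smooth_approx ftC ftC.continuous hε
    obtain ⟨K, hKlip⟩ := contDiff_exists_lipschitzOnWith Q hQsm
    -- rank computations
    have hsurj : ∀ ι, Function.Surjective ⇑(φ ι) := by
      intro ι
      cases ι with
      | inl q =>
        intro y
        refine ⟨fun c => if c = q.val.1 then y else 0, ?_⟩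
        simp only [hφ, Sum.elim_inl, LinearMap.sub_apply, LinearMap.proj_apply]
        rw [if_neg (fun h : q.val.2 = q.val.1 => q.property h.symm)]
        simp
      | inr q => exact fun y => ⟨fun _ => y, rfl⟩
    have hEfin : finrank ℝ (Fin k → Fin N → ℝ) = k * N := by
      rw [Module.finrank_pi_fintype]
      simp [Module.finrank_pi]
    have hrank : ∀ ι, finrank ℝ (LinearMap.ker (φ ι))
        + finrank ℝ (EuclideanSpace ℝ (Fin (i+1))) < finrank ℝ (Fin k → Fin N → ℝ) := by
      intro ι
      have h2 := LinearMap.finrank_range_add_finrank_ker (φ ι)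
      rw [LinearMap.range_eq_top.mpr (hsurj ι), finrank_top, hEfin] at h2
      have h3 : finrank ℝ (Fin N → ℝ) = N := by simp [Module.finrank_pi]
      rw [h3] at h2
      rw [finrank_euclideanSpace_fin, hEfin]
      have hkN : 1 ≤ k * N := Nat.one_le_iff_ne_zero.2 (by positivity)
      omega
    -- choose a good small translate
    obtain ⟨v, hvnorm, hvavoid⟩ := exists_good_translate Q hKlip
      (fun ι => LinearMap.ker (φ ι)) cc hrank hε
    set Q' : EuclideanSpace ℝ (Fin (i+1)) → (Fin k → Fin N → ℝ) := fun x => Q x + v with hQ'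
    have hQ'c : Continuous Q' := (hQsm.continuous).add continuous_const
    have hQ'A : ∀ x ∈ closedBall (0 : EuclideanSpace ℝ (Fin (i+1))) 1, Q' x ∉ A := by
      intro x hx hmem
      rw [hA, Set.mem_iUnion] at hmem
      obtain ⟨ι, hι⟩ := hmem
      refine hvavoid ι x hx ?_
      rw [LinearMap.mem_ker, map_sub, sub_eq_zero]
      exact hι
    have hQ'near : ∀ s : ↥(sphere (0 : EuclideanSpace ℝ (Fin (i+1))) 1),
        ‖Q' s.val - fhat s‖ < 2*ε := by
      intro s
      have h1 : Q' s.val - fhat s = (Q s.val - ftC s.val) + v := by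
        rw [hext0 s] at *
        rw [hQ']
        exact add_sub_right_comm _ _ _
      rw [h1]
      calc ‖(Q s.val - ftC s.val) + v‖ ≤ ‖Q s.val - ftC s.val‖ + ‖v‖ := norm_add_le _ _
        _ < ε + ε := add_lt_add (hQnear s.val) hvnorm
        _ = 2*ε := by ring
    -- glue
    obtain ⟨G, hGc, hGval, hGb⟩ := glue_extension A fhat hε hfar ftC ftC.continuous hext0
      Q' hQ'c hQ'A hQ'near
    have hGA : ∀ y : ↥(closedBall (0 : EuclideanSpace ℝ (Fin (i+1))) 1), G y.val ∉ A :=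
      fun y => hGval y.val y.property
    have hmem : ∀ (y : ↥(closedBall (0 : EuclideanSpace ℝ (Fin (i+1))) 1)) (a : Fin k),
        G y.val a ∈ (Set.range p)ᶜ := by
      intro y a hcon
      obtain ⟨j, hj⟩ := hcon
      exact hGA y (Set.mem_iUnion.2 ⟨Sum.inr (a, j), (hLpt _ _).2 hj.symm⟩)
    have hinj : ∀ y : ↥(closedBall (0 : EuclideanSpace ℝ (Fin (i+1))) 1),
        Function.Injective (fun a : Fin k =>
          (⟨G y.val a, hmem y a⟩ : ↥((Set.range p)ᶜ))) := by
      intro y a b hab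
      by_contra hne
      have h1 : G y.val a = G y.val b := congrArg Subtype.val hab
      exact hGA y (Set.mem_iUnion.2 ⟨Sum.inl ⟨(a, b), hne⟩, (hLdiag _ _).2 h1⟩)
    refine ⟨fun y => ⟨fun a => ⟨G y.val a, hmem y a⟩, hinj y⟩, ?_, ?_⟩
    · refine Continuous.subtype_mk (continuous_pi fun a => Continuous.subtype_mk ?_ _) _
      exact (continuous_apply a).comp (hGc.comp continuous_subtype_val)
    · intro x
      apply Subtype.ext
      funext a
      apply Subtype.ext
      show G x.val a = ((f x).val a).val
      rw [hGb x]
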